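/- arXiv:1803.04568 — 2 statements merged into one kernel-verified Lean document; each statement's English description precedes it below -/
import Mathlib

section
/- Let B = B(0,1) be the open unit ball in ℝ² and suppose C > 0 is a constant such that ‖∂_x² f‖_{L¹} ≤ C(‖f‖_∞ + ‖∇f‖_∞ + ‖Δf‖_{L¹}) for every f ∈ C_0^∞(B). Then ‖∂_x² f‖_{L¹} ≤ C‖Δf‖_{L¹} for every f ∈ C_0^∞(ℝ²). -/
open MeasureTheory Real

noncomputable section

/-- First partial derivative (with respect to the first coordinate) on `ℝ²`. -/
def pd1 (f : ℝ × ℝ → ℝ) (p : ℝ × ℝ) : ℝ := fderiv ℝ f p (1, 0)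

/-- Second partial derivative (with respect to the second coordinate) on `ℝ²`. -/
def pd2 (f : ℝ × ℝ → ℝ) (p : ℝ × ℝ) : ℝ := fderiv ℝ f p (0, 1)

/-- Euclidean magnitude of a vector in `ℝ²`. -/
def emag (v : ℝ × ℝ) : ℝ := Real.sqrt (v.1 ^ 2 + v.2 ^ 2)

/-- The open Euclidean unit ball `B(0,1)` in `ℝ²`. -/
def uball : Set (ℝ × ℝ) := {p : ℝ × ℝ | p.1 ^ 2 + p.2 ^ 2 < 1}

lemma hasFDerivAt_affine (a : ℝ) (b p : ℝ × ℝ) :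
    HasFDerivAt (fun p : ℝ × ℝ => a • p + b) (a • ContinuousLinearMap.id ℝ (ℝ × ℝ)) p :=
  ((hasFDerivAt_id p).const_smul a).add_const b

lemma contDiff_affine (a : ℝ) (b : ℝ × ℝ) :
    ContDiff ℝ (⊤ : ℕ∞) (fun p : ℝ × ℝ => a • p + b) :=
  (contDiff_id.const_smul a).add contDiff_const

lemma pd1_comp_affine (f : ℝ × ℝ → ℝ) (hf : Differentiable ℝ f) (a : ℝ) (b : ℝ × ℝ) (p : ℝ × ℝ) :
    pd1 (fun q => f (a • q + b)) p = a * pd1 f (a • p + b) := by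
  have h1 := (hf (a • p + b)).hasFDerivAt.comp p (hasFDerivAt_affine a b p)
  have h2 : fderiv ℝ (fun q => f (a • q + b)) p
      = (fderiv ℝ f (a • p + b)).comp (a • ContinuousLinearMap.id ℝ (ℝ × ℝ)) := h1.fderiv
  simp only [pd1, h2, ContinuousLinearMap.coe_comp', Function.comp_apply,
    ContinuousLinearMap.smul_apply, ContinuousLinearMap.coe_id', id_eq, _root_.map_smul,
    smul_eq_mul]

lemma pd2_comp_affine (f : ℝ × ℝ → ℝ) (hf : Differentiable ℝ f) (a : ℝ) (b : ℝ × ℝ) (p : ℝ × ℝ) :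
    pd2 (fun q => f (a • q + b)) p = a * pd2 f (a • p + b) := by
  have h1 := (hf (a • p + b)).hasFDerivAt.comp p (hasFDerivAt_affine a b p)
  have h2 : fderiv ℝ (fun q => f (a • q + b)) p
      = (fderiv ℝ f (a • p + b)).comp (a • ContinuousLinearMap.id ℝ (ℝ × ℝ)) := h1.fderiv
  simp only [pd2, h2, ContinuousLinearMap.coe_comp', Function.comp_apply,
    ContinuousLinearMap.smul_apply, ContinuousLinearMap.coe_id', id_eq, _root_.map_smul,
    smul_eq_mul]

lemma contDiff_pd1 {f : ℝ × ℝ → ℝ} (hf : ContDiff ℝ (⊤ : ℕ∞) f) :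
    ContDiff ℝ (⊤ : ℕ∞) (pd1 f) := by
  have h1 : ContDiff ℝ (⊤ : ℕ∞) (fun p => fderiv ℝ f p) := hf.fderiv_right le_rfl
  exact h1.clm_apply contDiff_const

lemma contDiff_pd2 {f : ℝ × ℝ → ℝ} (hf : ContDiff ℝ (⊤ : ℕ∞) f) :
    ContDiff ℝ (⊤ : ℕ∞) (pd2 f) := by
  have h1 : ContDiff ℝ (⊤ : ℕ∞) (fun p => fderiv ℝ f p) := hf.fderiv_right le_rfl
  exact h1.clm_apply contDiff_const

-- pd1 of a constant multiple
lemma pd1_const_mul {f : ℝ × ℝ → ℝ} (hf : Differentiable ℝ f) (c : ℝ) (p : ℝ × ℝ) :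
    pd1 (fun q => c * f q) p = c * pd1 f p := by
  simp only [pd1, fderiv_const_mul (hf p) c, ContinuousLinearMap.smul_apply, smul_eq_mul]

lemma pd2_const_mul {f : ℝ × ℝ → ℝ} (hf : Differentiable ℝ f) (c : ℝ) (p : ℝ × ℝ) :
    pd2 (fun q => c * f q) p = c * pd2 f p := by
  simp only [pd2, fderiv_const_mul (hf p) c, ContinuousLinearMap.smul_apply, smul_eq_mul]

lemma pd1_pd1_comp_affine (f : ℝ × ℝ → ℝ) (hf : ContDiff ℝ (⊤ : ℕ∞) f) (a : ℝ) (b : ℝ × ℝ)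
    (p : ℝ × ℝ) :
    pd1 (pd1 (fun q => f (a • q + b))) p = a ^ 2 * pd1 (pd1 f) (a • p + b) := by
  have hd : Differentiable ℝ f := hf.differentiable (by simp)
  have e1 : pd1 (fun q => f (a • q + b)) = fun q => a * pd1 f (a • q + b) :=
    funext (pd1_comp_affine f hd a b)
  rw [e1]
  have hdp : Differentiable ℝ (pd1 f) := (contDiff_pd1 hf).differentiable (by simp)
  have e2 : pd1 (fun q => a * pd1 f (a • q + b)) p
      = a * pd1 (fun q => pd1 f (a • q + b)) p := by
    have : Differentiable ℝ (fun q => pd1 f (a • q + b)) :=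
      hdp.comp ((contDiff_affine a b).differentiable (by simp))
    exact pd1_const_mul this a p
  rw [e2, pd1_comp_affine (pd1 f) hdp a b p]; ring

lemma pd2_pd2_comp_affine (f : ℝ × ℝ → ℝ) (hf : ContDiff ℝ (⊤ : ℕ∞) f) (a : ℝ) (b : ℝ × ℝ)
    (p : ℝ × ℝ) :
    pd2 (pd2 (fun q => f (a • q + b))) p = a ^ 2 * pd2 (pd2 f) (a • p + b) := by
  have hd : Differentiable ℝ f := hf.differentiable (by simp)
  have e1 : pd2 (fun q => f (a • q + b)) = fun q => a * pd2 f (a • q + b) :=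
    funext (pd2_comp_affine f hd a b)
  rw [e1]
  have hdp : Differentiable ℝ (pd2 f) := (contDiff_pd2 hf).differentiable (by simp)
  have e2 : pd2 (fun q => a * pd2 f (a • q + b)) p
      = a * pd2 (fun q => pd2 f (a • q + b)) p := by
    have : Differentiable ℝ (fun q => pd2 f (a • q + b)) :=
      hdp.comp ((contDiff_affine a b).differentiable (by simp))
    exact pd2_const_mul this a p
  rw [e2, pd2_comp_affine (pd2 f) hdp a b p]; ring

-- change of variables
lemma integral_comp_affine (F : ℝ × ℝ → ℝ) (a : ℝ) (ha : 0 < a) (b : ℝ × ℝ) :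
    ∫ p, F (a • p + b) = (a ^ 2)⁻¹ * ∫ p, F p := by
  have e1 : ∀ p : ℝ × ℝ, a • p + b = a • (p + a⁻¹ • b) := by
    intro p; rw [smul_add, smul_inv_smul₀ ha.ne']
  simp_rw [e1]
  rw [MeasureTheory.integral_add_right_eq_self (fun p => F (a • p)) (a⁻¹ • b)]
  have := MeasureTheory.Measure.integral_comp_smul (volume : Measure (ℝ × ℝ)) F a
  rw [this]
  have : Module.finrank ℝ (ℝ × ℝ) = 2 := by
    simp [Module.finrank_prod]
  rw [this, smul_eq_mul, abs_of_pos (by positivity)]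

-- support lemmas
lemma pd1_eq_zero_of_not_mem {g : ℝ × ℝ → ℝ} {p : ℝ × ℝ} (hp : p ∉ tsupport g) :
    pd1 g p = 0 := by
  have : fderiv ℝ g p = 0 := by
    by_contra hne
    exact hp (support_fderiv_subset ℝ (Function.mem_support.mpr hne))
  simp [pd1, this]

lemma pd2_eq_zero_of_not_mem {g : ℝ × ℝ → ℝ} {p : ℝ × ℝ} (hp : p ∉ tsupport g) :
    pd2 g p = 0 := by
  have : fderiv ℝ g p = 0 := by
    by_contra hne
    exact hp (support_fderiv_subset ℝ (Function.mem_support.mpr hne))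
  simp [pd2, this]

lemma tsupport_pd1_subset (g : ℝ × ℝ → ℝ) : tsupport (pd1 g) ⊆ tsupport g := by
  apply closure_minimal _ isClosed_closure
  intro p hp
  by_contra hne
  exact hp (pd1_eq_zero_of_not_mem hne)

lemma tsupport_pd2_subset (g : ℝ × ℝ → ℝ) : tsupport (pd2 g) ⊆ tsupport g := by
  apply closure_minimal _ isClosed_closure
  intro p hp
  by_contra hne
  exact hp (pd2_eq_zero_of_not_mem hne)

-- abs of a sum where at most one term is nonzero
lemma abs_sum_eq_sum_abs {ι : Type*} (s : Finset ι) (v : ι → ℝ)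
    (huniq : ∀ i ∈ s, ∀ j ∈ s, v i ≠ 0 → v j ≠ 0 → i = j) :
    |∑ i ∈ s, v i| = ∑ i ∈ s, |v i| := by
  by_cases hz : ∀ i ∈ s, v i = 0
  · rw [Finset.sum_eq_zero hz, Finset.sum_eq_zero (fun i hi => by rw [hz i hi, abs_zero]),
      abs_zero]
  · push_neg at hz
    obtain ⟨i0, hi0, hvi0⟩ := hz
    have h1 : ∑ i ∈ s, v i = v i0 :=
      Finset.sum_eq_single_of_mem i0 hi0 (fun j hj hji =>
        by_contra (fun hvj => hji (huniq j hj i0 hi0 hvj hvi0)))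
    have h2 : ∑ i ∈ s, |v i| = |v i0| :=
      Finset.sum_eq_single_of_mem i0 hi0 (fun j hj hji => by
        by_contra hvj
        exact hji (huniq j hj i0 hi0 (fun h0 => hvj (by rw [h0, abs_zero])) hvi0))
    rw [h1, h2]

lemma abs_sum_le_of_unique {ι : Type*} (s : Finset ι) (v : ι → ℝ) (M : ℝ) (hM : 0 ≤ M)
    (hle : ∀ i ∈ s, |v i| ≤ M)
    (huniq : ∀ i ∈ s, ∀ j ∈ s, v i ≠ 0 → v j ≠ 0 → i = j) :
    |∑ i ∈ s, v i| ≤ M := by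
  by_cases hz : ∀ i ∈ s, v i = 0
  · rw [Finset.sum_eq_zero hz, abs_zero]; exact hM
  · push_neg at hz
    obtain ⟨i0, hi0, hvi0⟩ := hz
    have h1 : ∑ i ∈ s, v i = v i0 :=
      Finset.sum_eq_single_of_mem i0 hi0 (fun j hj hji =>
        by_contra (fun hvj => hji (huniq j hj i0 hi0 hvj hvi0)))
    rw [h1]; exact hle i0 hi0

lemma pd1_sum {ι : Type*} (s : Finset ι) (φ : ι → ℝ × ℝ → ℝ)
    (hφ : ∀ i ∈ s, Differentiable ℝ (φ i)) (p : ℝ × ℝ) :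
    pd1 (fun q => ∑ i ∈ s, φ i q) p = ∑ i ∈ s, pd1 (φ i) p := by
  rw [pd1, fderiv_fun_sum (fun i hi => (hφ i hi).differentiableAt)]
  simp [pd1, ContinuousLinearMap.sum_apply]

lemma pd2_sum {ι : Type*} (s : Finset ι) (φ : ι → ℝ × ℝ → ℝ)
    (hφ : ∀ i ∈ s, Differentiable ℝ (φ i)) (p : ℝ × ℝ) :
    pd2 (fun q => ∑ i ∈ s, φ i q) p = ∑ i ∈ s, pd2 (φ i) p := by
  rw [pd2, fderiv_fun_sum (fun i hi => (hφ i hi).differentiableAt)]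
  simp [pd2, ContinuousLinearMap.sum_apply]

lemma integrable_of_cd {g : ℝ × ℝ → ℝ} (hg : Continuous g) (hgc : HasCompactSupport g) :
    Integrable g := hg.integrable_of_hasCompactSupport hgc

-- bound on a continuous compactly supported function
lemma exists_bound {g : ℝ × ℝ → ℝ} (hg : Continuous g) (hgc : HasCompactSupport g)
    (hg0 : ∀ p, 0 ≤ g p) : ∃ M, 0 ≤ M ∧ ∀ p, g p ≤ M := by
  obtain ⟨x, hx⟩ := hg.exists_forall_ge_of_hasCompactSupport hgc
  exact ⟨g x, hg0 x, hx⟩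

lemma emag_mul (a x y : ℝ) : emag (a * x, a * y) = |a| * emag (x, y) := by
  simp only [emag]
  rw [show (a*x)^2 + (a*y)^2 = a^2 * (x^2+y^2) by ring, Real.sqrt_mul (sq_nonneg a),
    Real.sqrt_sq_eq_abs]

lemma emag_nonneg (v : ℝ × ℝ) : 0 ≤ emag v := Real.sqrt_nonneg _

lemma arith_sep {N x y p : ℝ} (hN : 1 ≤ N) (hxy : 1/N ≤ |x - y|)
    (h1 : |p - x| ≤ (4*N)⁻¹) (h2 : |p - y| ≤ (4*N)⁻¹) : False := by
  have hN0 : (0:ℝ) < N := by linarith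
  have htri : |x - y| ≤ |p - x| + |p - y| := by
    have := abs_sub_le x p y
    calc |x - y| ≤ |x - p| + |p - y| := abs_sub_le x p y
    _ = |p - x| + |p - y| := by rw [abs_sub_comm x p]
  have hkey : 1/N ≤ 2 * (4*N)⁻¹ := by linarith
  rw [div_eq_mul_inv, one_mul] at hkey
  have h4 : (0:ℝ) < 4*N := by linarith
  have e : (2:ℝ) * (4*N)⁻¹ = (2*N)⁻¹ := by
    field_simp; ring
  rw [e] at hkey
  have h2N : (0:ℝ) < 2*N := by linarith
  have hfin : (2:ℝ)*N ≤ N := (inv_le_inv₀ hN0 h2N).mp hkey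
  linarith

lemma arith_cxsep {N i k : ℝ} (hN : 0 < N) (hik : 1 ≤ |i - k|) :
    1/N ≤ |((2*i+1)/(2*N) - 1/2) - ((2*k+1)/(2*N) - 1/2)| := by
  have e : ((2*i+1)/(2*N) - 1/2) - ((2*k+1)/(2*N) - 1/2) = (i-k)/N := by
    field_simp; ring
  rw [e, abs_div, abs_of_pos hN, div_le_div_iff₀ hN hN]
  nlinarith

lemma arith_cxb {N i : ℝ} (hN : 1 ≤ N) (hi0 : 0 ≤ i) (hi : i + 1 ≤ N) :
    -(1/2) + (4*N)⁻¹ ≤ ((2*i+1)/(2*N) - 1/2) - (4*N)⁻¹ ∧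
    ((2*i+1)/(2*N) - 1/2) + (4*N)⁻¹ ≤ 1/2 - (4*N)⁻¹ := by
  have hN0 : (0:ℝ) < N := by linarith
  have h2N : (0:ℝ) < 2*N := by linarith
  have e : (2:ℝ) * (4*N)⁻¹ = (2*N)⁻¹ := by field_simp; ring
  have key1 : (2*N)⁻¹ ≤ (2*i+1)/(2*N) := by
    rw [inv_eq_one_div, div_le_div_iff₀ h2N h2N]
    nlinarith
  have key2 : (2*i+1)/(2*N) ≤ 1 - (2*N)⁻¹ := by
    have e2 : (1:ℝ) - (2*N)⁻¹ = (2*N-1)/(2*N) := by field_simp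
    rw [e2, div_le_div_iff₀ h2N h2N]
    nlinarith
  constructor <;> linarith

lemma arith_ball {x y c d r : ℝ} (hr : 0 < r)
    (hc1 : -(1/2) + r ≤ c - r) (hc2 : c + r ≤ 1/2 - r)
    (hd1 : -(1/2) + r ≤ d - r) (hd2 : d + r ≤ 1/2 - r)
    (hx1 : c - r ≤ x) (hx2 : x ≤ c + r) (hy1 : d - r ≤ y) (hy2 : y ≤ d + r) :
    x^2 + y^2 < 1 := by
  have h1 : -(1/2:ℝ) ≤ x := by linarith
  have h2 : x ≤ (1/2:ℝ) := by linarith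
  have h3 : -(1/2:ℝ) ≤ y := by linarith
  have h4 : y ≤ (1/2:ℝ) := by linarith
  nlinarith

lemma key_step (C : ℝ) (hC : 0 < C)
    (h : ∀ f : ℝ × ℝ → ℝ, ContDiff ℝ (⊤ : ℕ∞) f → HasCompactSupport f → tsupport f ⊆ uball →
      (∫ p, |pd1 (pd1 f) p|) ≤ C * ((⨆ p, |f p|) + (⨆ p, emag (pd1 f p, pd2 f p)) +
          ∫ p, |pd1 (pd1 f) p + pd2 (pd2 f) p|))
    (f : ℝ × ℝ → ℝ) (hf : ContDiff ℝ (⊤ : ℕ∞) f)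
    (R : ℝ) (hR : 1 ≤ R) (hsup : ∀ p ∈ tsupport f, |p.1| ≤ R ∧ |p.2| ≤ R)
    (M1 : ℝ) (hM1 : ∀ p, |f p| ≤ M1)
    (M2 : ℝ) (hM2 : ∀ p, emag (pd1 f p, pd2 f p) ≤ M2)
    (n : ℕ) (hn : 1 ≤ n) :
    (n:ℝ)^2 * (∫ p, |pd1 (pd1 f) p|) ≤
      C * (M1 + (4*R*(n:ℝ)) * M2 + (n:ℝ)^2 * ∫ p, |pd1 (pd1 f) p + pd2 (pd2 f) p|) := by
  have hR0 : (0:ℝ) < R := lt_of_lt_of_le one_pos hR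
  have hN : (1:ℝ) ≤ (n:ℝ) := by exact_mod_cast hn
  have hN0 : (0:ℝ) < (n:ℝ) := lt_of_lt_of_le one_pos hN
  set a : ℝ := 4*R*(n:ℝ) with ha_def
  have ha : 0 < a := by positivity
  set r : ℝ := (4*(n:ℝ))⁻¹ with hr_def
  have hr : 0 < r := by positivity
  set s : Finset (ℕ × ℕ) := Finset.range n ×ˢ Finset.range n with hs_def
  set cx : ℕ → ℝ := fun i => (2*(i:ℝ)+1)/(2*(n:ℝ)) - 1/2 with hcx_def
  set b : ℕ × ℕ → ℝ × ℝ := fun ij => (-(a * cx ij.1), -(a * cx ij.2)) with hb_def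
  set φ : ℕ × ℕ → ℝ × ℝ → ℝ := fun ij p => f (a • p + b ij) with hφ_def
  set S : ℕ × ℕ → Set (ℝ × ℝ) := fun ij =>
    Set.Icc (cx ij.1 - r) (cx ij.1 + r) ×ˢ Set.Icc (cx ij.2 - r) (cx ij.2 + r) with hS_def
  -- coordinates of the affine map
  have hT : ∀ ij : ℕ × ℕ, ∀ p : ℝ × ℝ,
      a • p + b ij = (a * (p.1 - cx ij.1), a * (p.2 - cx ij.2)) := by
    intro ij p
    have h0 : a • p = (a * p.1, a * p.2) := rfl
    rw [h0, hb_def]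
    simp only [Prod.mk_add_mk, Prod.mk.injEq]
    constructor <;> ring
  have hScl : ∀ ij, IsClosed (S ij) := fun ij => (isClosed_Icc.prod isClosed_Icc)
  have hScp : ∀ ij, IsCompact (S ij) := fun ij => (isCompact_Icc.prod isCompact_Icc)
  -- supports
  have hRa : R / a = r := by
    rw [ha_def, hr_def]; field_simp
  have hsupp : ∀ ij, tsupport (φ ij) ⊆ S ij := by
    intro ij
    apply closure_minimal _ (hScl ij)
    intro p hp
    have hq : (a • p + b ij) ∈ tsupport f := subset_closure hp
    obtain ⟨h1, h2⟩ := hsup _ hq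
    rw [hT ij p] at h1 h2
    simp only [abs_mul, abs_of_pos ha] at h1 h2
    have e1 : |p.1 - cx ij.1| ≤ r := by
      rw [← hRa, le_div_iff₀ ha]
      linarith only [h1]
    have e2 : |p.2 - cx ij.2| ≤ r := by
      rw [← hRa, le_div_iff₀ ha]
      linarith only [h2]
    rw [abs_le] at e1 e2
    exact ⟨⟨by linarith only [e1.1], by linarith only [e1.2]⟩,
      ⟨by linarith only [e2.1], by linarith only [e2.2]⟩⟩
  -- separation of the centers
  have hcxsep : ∀ i k : ℕ, i ≠ k → 1/(n:ℝ) ≤ |cx i - cx k| := by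
    intro i k hik
    have h1 : (1:ℝ) ≤ |(i:ℝ) - (k:ℝ)| := by
      have h0 : ((i:ℤ) - (k:ℤ)) ≠ 0 := sub_ne_zero.mpr (by exact_mod_cast hik)
      have h2 : (1:ℤ) ≤ |(i:ℤ) - (k:ℤ)| := Int.one_le_abs h0
      have h3 : ((1:ℤ):ℝ) ≤ ((|(i:ℤ) - (k:ℤ)|:ℤ):ℝ) := by exact_mod_cast h2
      push_cast at h3
      convert h3 using 2
    exact arith_cxsep hN0 h1
  have hdisj : ∀ ij ∈ s, ∀ kl ∈ s, ij ≠ kl → ∀ p : ℝ × ℝ, p ∈ S ij → p ∈ S kl → False := by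
    intro ij _ kl _ hne p hpij hpkl
    obtain ⟨⟨a1, a2⟩, ⟨a3, a4⟩⟩ := hpij
    obtain ⟨⟨b1, b2⟩, ⟨b3, b4⟩⟩ := hpkl
    have hne' : ij.1 ≠ kl.1 ∨ ij.2 ≠ kl.2 := by
      by_contra hcon
      push_neg at hcon
      exact hne (Prod.ext hcon.1 hcon.2)
    rcases hne' with h1 | h1
    · refine arith_sep hN (hcxsep ij.1 kl.1 h1) (p := p.1) ?_ ?_ <;>
        rw [← hr_def, abs_le] <;> constructor <;>
        [linarith only [a1]; linarith only [a2]; linarith only [b1]; linarith only [b2]]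
    · refine arith_sep hN (hcxsep ij.2 kl.2 h1) (p := p.2) ?_ ?_ <;>
        rw [← hr_def, abs_le] <;> constructor <;>
        [linarith only [a3]; linarith only [a4]; linarith only [b3]; linarith only [b4]]
  -- S inside the unit ball
  have hcxb : ∀ i < n, -(1/2) + r ≤ cx i - r ∧ cx i + r ≤ 1/2 - r := by
    intro i hi
    have hi' : (i:ℝ) + 1 ≤ (n:ℝ) := by exact_mod_cast hi
    have hi0 : (0:ℝ) ≤ (i:ℝ) := Nat.cast_nonneg i
    exact arith_cxb hN hi0 hi'
  have hSub : ∀ ij ∈ s, S ij ⊆ uball := by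
    intro ij hij p hp
    rw [hs_def, Finset.mem_product, Finset.mem_range, Finset.mem_range] at hij
    obtain ⟨c1, c2⟩ := hcxb ij.1 hij.1
    obtain ⟨d1, d2⟩ := hcxb ij.2 hij.2
    obtain ⟨⟨e1, e2⟩, ⟨e3, e4⟩⟩ := hp
    exact arith_ball hr c1 c2 d1 d2 e1 e2 e3 e4
  -- smoothness and derivative identities for the copies
  have hφcd : ∀ ij, ContDiff ℝ (⊤ : ℕ∞) (φ ij) := fun ij => hf.comp (contDiff_affine a (b ij))
  have hφd : ∀ ij, Differentiable ℝ (φ ij) :=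
    fun ij => (hφcd ij).differentiable (by simp)
  have hφd1 : ∀ ij, Differentiable ℝ (pd1 (φ ij)) :=
    fun ij => (contDiff_pd1 (hφcd ij)).differentiable (by simp)
  have hφd2 : ∀ ij, Differentiable ℝ (pd2 (φ ij)) :=
    fun ij => (contDiff_pd2 (hφcd ij)).differentiable (by simp)
  have hv11 : ∀ ij p, pd1 (pd1 (φ ij)) p = a^2 * pd1 (pd1 f) (a • p + b ij) :=
    fun ij p => pd1_pd1_comp_affine f hf a (b ij) p
  have hv22 : ∀ ij p, pd2 (pd2 (φ ij)) p = a^2 * pd2 (pd2 f) (a • p + b ij) :=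
    fun ij p => pd2_pd2_comp_affine f hf a (b ij) p
  -- vanishing outside S
  have hz : ∀ ij, ∀ p, p ∉ S ij → φ ij p = 0 ∧ pd1 (φ ij) p = 0 ∧ pd2 (φ ij) p = 0 ∧
      pd1 (pd1 (φ ij)) p = 0 ∧ pd2 (pd2 (φ ij)) p = 0 := by
    intro ij p hp
    have h0 : p ∉ tsupport (φ ij) := fun hc => hp (hsupp ij hc)
    have h1 : p ∉ tsupport (pd1 (φ ij)) := fun hc => h0 (tsupport_pd1_subset _ hc)
    have h2 : p ∉ tsupport (pd2 (φ ij)) := fun hc => h0 (tsupport_pd2_subset _ hc)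
    exact ⟨image_eq_zero_of_notMem_tsupport h0, pd1_eq_zero_of_not_mem h0,
      pd2_eq_zero_of_not_mem h0, pd1_eq_zero_of_not_mem h1, pd2_eq_zero_of_not_mem h2⟩
  -- the test function
  set g : ℝ × ℝ → ℝ := fun p => ∑ ij ∈ s, φ ij p with hg_def
  have hgcd : ContDiff ℝ (⊤ : ℕ∞) g := ContDiff.sum (fun ij _ => hφcd ij)
  have hg1 : pd1 g = fun p => ∑ ij ∈ s, pd1 (φ ij) p :=
    funext (fun p => pd1_sum s φ (fun ij _ => hφd ij) p)
  have hg2 : pd2 g = fun p => ∑ ij ∈ s, pd2 (φ ij) p :=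
    funext (fun p => pd2_sum s φ (fun ij _ => hφd ij) p)
  have hg11 : ∀ p, pd1 (pd1 g) p = ∑ ij ∈ s, pd1 (pd1 (φ ij)) p := by
    intro p
    rw [hg1]
    exact pd1_sum s (fun ij => pd1 (φ ij)) (fun ij _ => hφd1 ij) p
  have hg22 : ∀ p, pd2 (pd2 g) p = ∑ ij ∈ s, pd2 (pd2 (φ ij)) p := by
    intro p
    rw [hg2]
    exact pd2_sum s (fun ij => pd2 (φ ij)) (fun ij _ => hφd2 ij) p
  -- support of g
  have hgsupp : tsupport g ⊆ ⋃ ij ∈ (s : Set (ℕ × ℕ)), S ij := by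
    apply closure_minimal _ (Set.Finite.isClosed_biUnion (s.finite_toSet) (fun ij _ => hScl ij))
    intro p hp
    rw [Function.mem_support] at hp
    have hex : ∃ ij ∈ s, φ ij p ≠ 0 := by
      by_contra hcon
      push_neg at hcon
      exact hp (Finset.sum_eq_zero hcon)
    obtain ⟨ij, hijs, hne⟩ := hex
    exact Set.mem_biUnion hijs (hsupp ij (subset_closure (Function.mem_support.mpr hne)))
  have hgub : tsupport g ⊆ uball := by
    refine hgsupp.trans ?_
    intro p hp
    rw [Set.mem_iUnion₂] at hp
    obtain ⟨ij, hijs, hpS⟩ := hp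
    exact hSub ij hijs hpS
  have hballbox : uball ⊆ Set.Icc (-1:ℝ) 1 ×ˢ Set.Icc (-1:ℝ) 1 := by
    intro p hp
    have hp' : p.1^2 + p.2^2 < 1 := hp
    constructor
    · constructor <;> nlinarith [sq_nonneg p.1, sq_nonneg p.2]
    · constructor <;> nlinarith [sq_nonneg p.1, sq_nonneg p.2]
  have hgca : HasCompactSupport g :=
    IsCompact.of_isClosed_subset (isCompact_Icc.prod (isCompact_Icc : IsCompact (Set.Icc (-1:ℝ) 1)))
      (isClosed_tsupport g) (hgub.trans hballbox)
  -- sup bounds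
  have hfd : Differentiable ℝ f := hf.differentiable (by simp)
  have hM1' : (0:ℝ) ≤ M1 := le_trans (abs_nonneg _) (hM1 0)
  have hM2' : (0:ℝ) ≤ M2 := le_trans (emag_nonneg _) (hM2 0)
  have hsup1 : (⨆ p, |g p|) ≤ M1 := by
    apply ciSup_le
    intro p
    apply abs_sum_le_of_unique s (fun ij => φ ij p) M1 hM1' (fun ij _ => hM1 _)
    intro ij hij kl hkl h1 h2
    by_contra hne
    have hpij : p ∈ S ij := by by_contra hc; exact h1 (hz ij p hc).1
    have hpkl : p ∈ S kl := by by_contra hc; exact h2 (hz kl p hc).1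
    exact hdisj ij hij kl hkl hne p hpij hpkl
  have hsup2 : (⨆ p, emag (pd1 g p, pd2 g p)) ≤ a * M2 := by
    apply ciSup_le
    intro p
    by_cases hex : ∃ ij ∈ s, p ∈ S ij
    · obtain ⟨ij, hijs, hpS⟩ := hex
      have e1 : pd1 g p = pd1 (φ ij) p := by
        rw [hg1]
        exact Finset.sum_eq_single_of_mem ij hijs
          (fun kl hkls hne => (hz kl p (fun hcp => hdisj kl hkls ij hijs hne p hcp hpS)).2.1)
      have e2 : pd2 g p = pd2 (φ ij) p := by
        rw [hg2]
        exact Finset.sum_eq_single_of_mem ij hijs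
          (fun kl hkls hne => (hz kl p (fun hcp => hdisj kl hkls ij hijs hne p hcp hpS)).2.2.1)
      rw [e1, e2, hφ_def]
      rw [pd1_comp_affine f hfd a (b ij) p, pd2_comp_affine f hfd a (b ij) p]
      rw [emag_mul, abs_of_pos ha]
      exact mul_le_mul_of_nonneg_left (hM2 _) ha.le
    · push_neg at hex
      have e1 : pd1 g p = 0 := by
        rw [hg1]; exact Finset.sum_eq_zero (fun kl hkl => (hz kl p (hex kl hkl)).2.1)
      have e2 : pd2 g p = 0 := by
        rw [hg2]; exact Finset.sum_eq_zero (fun kl hkl => (hz kl p (hex kl hkl)).2.2.1)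
      rw [e1, e2]
      have : emag (0, 0) = 0 := by simp [emag]
      rw [this]
      positivity
  -- compact supports and integrability
  have hφcs : ∀ ij, HasCompactSupport (φ ij) :=
    fun ij => IsCompact.of_isClosed_subset (hScp ij) (isClosed_tsupport _) (hsupp ij)
  have hφcs11 : ∀ ij, HasCompactSupport (pd1 (pd1 (φ ij))) :=
    fun ij => IsCompact.of_isClosed_subset (hφcs ij) (isClosed_tsupport _)
      ((tsupport_pd1_subset _).trans (tsupport_pd1_subset _))
  have hφcs22 : ∀ ij, HasCompactSupport (pd2 (pd2 (φ ij))) :=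
    fun ij => IsCompact.of_isClosed_subset (hφcs ij) (isClosed_tsupport _)
      ((tsupport_pd2_subset _).trans (tsupport_pd2_subset _))
  have hφc11 : ∀ ij, Continuous (pd1 (pd1 (φ ij))) :=
    fun ij => (contDiff_pd1 (contDiff_pd1 (hφcd ij))).continuous
  have hφc22 : ∀ ij, Continuous (pd2 (pd2 (φ ij))) :=
    fun ij => (contDiff_pd2 (contDiff_pd2 (hφcd ij))).continuous
  have hint11 : ∀ ij, Integrable (fun p => |pd1 (pd1 (φ ij)) p|) := by
    intro ij
    exact ((hφc11 ij).abs).integrable_of_hasCompactSupport (hφcs11 ij).abs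
  have hintw : ∀ ij, Integrable (fun p => |pd1 (pd1 (φ ij)) p + pd2 (pd2 (φ ij)) p|) := by
    intro ij
    exact (((hφc11 ij).add (hφc22 ij)).abs).integrable_of_hasCompactSupport
      ((hφcs11 ij).add (hφcs22 ij)).abs
  -- integral identities for a single copy
  have ha2 : (0:ℝ) < a^2 := pow_pos ha 2
  have I11 : ∀ ij, (∫ p, |pd1 (pd1 (φ ij)) p|) = ∫ p, |pd1 (pd1 f) p| := by
    intro ij
    have e : (fun p => |pd1 (pd1 (φ ij)) p|)
        = fun p => a^2 * |pd1 (pd1 f) (a • p + b ij)| := by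
      funext p
      rw [hv11 ij p, abs_mul, abs_of_pos ha2]
    rw [e, MeasureTheory.integral_const_mul,
      integral_comp_affine (fun q => |pd1 (pd1 f) q|) a ha (b ij)]
    field_simp
  have Iw : ∀ ij, (∫ p, |pd1 (pd1 (φ ij)) p + pd2 (pd2 (φ ij)) p|)
      = ∫ p, |pd1 (pd1 f) p + pd2 (pd2 f) p| := by
    intro ij
    have e : (fun p => |pd1 (pd1 (φ ij)) p + pd2 (pd2 (φ ij)) p|)
        = fun p => a^2 * |pd1 (pd1 f) (a • p + b ij) + pd2 (pd2 f) (a • p + b ij)| := by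
      funext p
      rw [hv11 ij p, hv22 ij p, ← mul_add, abs_mul, abs_of_pos ha2]
    rw [e, MeasureTheory.integral_const_mul,
      integral_comp_affine (fun q => |pd1 (pd1 f) q + pd2 (pd2 f) q|) a ha (b ij)]
    field_simp
  have hcard : ((s.card : ℝ)) = (n:ℝ)^2 := by
    rw [hs_def, Finset.card_product, Finset.card_range]
    push_cast; ring
  -- total integrals
  have IL : (∫ p, |pd1 (pd1 g) p|) = (n:ℝ)^2 * ∫ p, |pd1 (pd1 f) p| := by
    have e : (fun p => |pd1 (pd1 g) p|) = fun p => ∑ ij ∈ s, |pd1 (pd1 (φ ij)) p| := by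
      funext p
      rw [hg11 p]
      apply abs_sum_eq_sum_abs
      intro ij hij kl hkl h1 h2
      by_contra hne
      have hpij : p ∈ S ij := by by_contra hc; exact h1 (hz ij p hc).2.2.2.1
      have hpkl : p ∈ S kl := by by_contra hc; exact h2 (hz kl p hc).2.2.2.1
      exact hdisj ij hij kl hkl hne p hpij hpkl
    rw [e, MeasureTheory.integral_finset_sum s (fun ij _ => hint11 ij)]
    rw [Finset.sum_congr rfl (fun ij _ => I11 ij), Finset.sum_const, nsmul_eq_mul, hcard]
  have ID : (∫ p, |pd1 (pd1 g) p + pd2 (pd2 g) p|)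
      = (n:ℝ)^2 * ∫ p, |pd1 (pd1 f) p + pd2 (pd2 f) p| := by
    have e : (fun p => |pd1 (pd1 g) p + pd2 (pd2 g) p|)
        = fun p => ∑ ij ∈ s, |pd1 (pd1 (φ ij)) p + pd2 (pd2 (φ ij)) p| := by
      funext p
      rw [hg11 p, hg22 p, ← Finset.sum_add_distrib]
      apply abs_sum_eq_sum_abs
      intro ij hij kl hkl h1 h2
      by_contra hne
      have hpij : p ∈ S ij := by
        by_contra hc
        obtain ⟨-, -, -, z1, z2⟩ := hz ij p hc
        exact h1 (by rw [z1, z2, add_zero])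
      have hpkl : p ∈ S kl := by
        by_contra hc
        obtain ⟨-, -, -, z1, z2⟩ := hz kl p hc
        exact h2 (by rw [z1, z2, add_zero])
      exact hdisj ij hij kl hkl hne p hpij hpkl
    rw [e, MeasureTheory.integral_finset_sum s (fun ij _ => hintw ij)]
    rw [Finset.sum_congr rfl (fun ij _ => Iw ij), Finset.sum_const, nsmul_eq_mul, hcard]
  -- apply the hypothesis
  have hmain := h g hgcd hgca hgub
  rw [IL, ID] at hmain
  refine le_trans hmain ?_
  apply mul_le_mul_of_nonneg_left _ hC.le
  exact add_le_add (add_le_add hsup1 hsup2) le_rfl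

/-- If `C > 0` is such that `‖∂_x² f‖_{L¹} ≤ C (‖f‖_∞ + ‖∇f‖_∞ + ‖Δf‖_{L¹})` for every
`f ∈ C_0^∞(B(0,1))`, then `‖∂_x² f‖_{L¹} ≤ C ‖Δf‖_{L¹}` for every `f ∈ C_0^∞(ℝ²)`. -/
theorem scaling_removes_lower_order_terms (C : ℝ) (hC : 0 < C)
    (h : ∀ f : ℝ × ℝ → ℝ,
      ContDiff ℝ (⊤ : ℕ∞) f → HasCompactSupport f → tsupport f ⊆ uball →
      (∫ p, |pd1 (pd1 f) p|) ≤
        C * ((⨆ p, |f p|) + (⨆ p, emag (pd1 f p, pd2 f p)) +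
          ∫ p, |pd1 (pd1 f) p + pd2 (pd2 f) p|)) :
    ∀ f : ℝ × ℝ → ℝ, ContDiff ℝ (⊤ : ℕ∞) f → HasCompactSupport f →
      (∫ p, |pd1 (pd1 f) p|) ≤ C * ∫ p, |pd1 (pd1 f) p + pd2 (pd2 f) p| := by
  intro f hf hfc
  -- a bound for the support
  obtain ⟨r0, hr0⟩ := hfc.isBounded.subset_closedBall 0
  set R : ℝ := max r0 1 with hR_def
  have hR : 1 ≤ R := le_max_right _ _
  have hsup : ∀ p ∈ tsupport f, |p.1| ≤ R ∧ |p.2| ≤ R := by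
    intro p hp
    have h1 : ‖p‖ ≤ r0 := by simpa [Metric.mem_closedBall] using hr0 hp
    have h2 : ‖p‖ = max ‖p.1‖ ‖p.2‖ := rfl
    rw [h2] at h1
    constructor
    · calc |p.1| = ‖p.1‖ := rfl
        _ ≤ max ‖p.1‖ ‖p.2‖ := le_max_left _ _
        _ ≤ r0 := h1
        _ ≤ R := le_max_left _ _
    · calc |p.2| = ‖p.2‖ := rfl
        _ ≤ max ‖p.1‖ ‖p.2‖ := le_max_right _ _
        _ ≤ r0 := h1
        _ ≤ R := le_max_left _ _
  -- sup bounds for f and its gradient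
  obtain ⟨M1, hM1', hM1⟩ := exists_bound (g := fun p => |f p|) hf.continuous.abs hfc.abs
    (fun p => abs_nonneg _)
  have hgradc : Continuous (fun p => emag (pd1 f p, pd2 f p)) := by
    apply Real.continuous_sqrt.comp
    exact (((contDiff_pd1 hf).continuous.pow 2).add ((contDiff_pd2 hf).continuous.pow 2))
  have hgradcs : HasCompactSupport (fun p => emag (pd1 f p, pd2 f p)) := by
    apply IsCompact.of_isClosed_subset hfc (isClosed_tsupport _)
    apply closure_minimal _ (isClosed_tsupport f)
    intro p hp
    rw [Function.mem_support] at hp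
    by_contra hc
    apply hp
    have h1 : p ∉ tsupport f := hc
    rw [pd1_eq_zero_of_not_mem h1, pd2_eq_zero_of_not_mem h1]
    simp [emag]
  obtain ⟨M2, hM2', hM2⟩ := exists_bound hgradc hgradcs (fun p => emag_nonneg _)
  set L : ℝ := ∫ p, |pd1 (pd1 f) p| with hL_def
  set D : ℝ := ∫ p, |pd1 (pd1 f) p + pd2 (pd2 f) p| with hD_def
  -- the scaled inequality
  have key : ∀ n : ℕ, 1 ≤ n → L ≤ C*M1/(n:ℝ)^2 + (C*(4*R*M2))/(n:ℝ) + C*D := by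
    intro n hn
    have hN : (1:ℝ) ≤ (n:ℝ) := by exact_mod_cast hn
    have hN0 : (0:ℝ) < (n:ℝ) := lt_of_lt_of_le one_pos hN
    have hn2 : (0:ℝ) < (n:ℝ)^2 := by positivity
    have h1 := key_step C hC h f hf R hR hsup M1 hM1 M2 hM2 n hn
    have h2 : L ≤ (C * (M1 + (4*R*(n:ℝ))*M2 + (n:ℝ)^2*D))/(n:ℝ)^2 := by
      rw [le_div_iff₀ hn2]
      calc L * (n:ℝ)^2 = (n:ℝ)^2 * L := by ring
        _ ≤ _ := h1
    refine h2.trans (le_of_eq ?_)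
    field_simp
  -- pass to the limit
  have hlim : Filter.Tendsto (fun n : ℕ => C*M1/(n:ℝ)^2 + (C*(4*R*M2))/(n:ℝ) + C*D)
      Filter.atTop (nhds (C*D)) := by
    have t0 : Filter.Tendsto (fun n : ℕ => (n:ℝ)) Filter.atTop Filter.atTop :=
      tendsto_natCast_atTop_atTop
    have tp : Filter.Tendsto (fun n : ℕ => (n:ℝ)^2) Filter.atTop Filter.atTop :=
      (Filter.tendsto_pow_atTop (two_ne_zero)).comp t0
    have t1 : Filter.Tendsto (fun n : ℕ => C*M1/(n:ℝ)^2) Filter.atTop (nhds 0) :=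
      Filter.Tendsto.div_atTop tendsto_const_nhds tp
    have t2 : Filter.Tendsto (fun n : ℕ => (C*(4*R*M2))/(n:ℝ)) Filter.atTop (nhds 0) :=
      Filter.Tendsto.div_atTop tendsto_const_nhds t0
    have := (t1.add t2).add (tendsto_const_nhds (x := C*D) (f := Filter.atTop (α := ℕ)))
    simpa using this
  exact ge_of_tendsto hlim (Filter.eventually_atTop.mpr ⟨1, fun n hn => key n hn⟩)
end
end

section
/- Let ϱ be a probability density on ℝ and b a Borel function on ℝ with ∫_ℝ |b(x)|ϱ(x) dx < ∞ such that the equation ϱ'' − (ϱb)' = 0 holds in the sense of distributions (i.e., ∫_ℝ [φ'' + b φ'] ϱ dx = 0 for all φ ∈ C_0^∞(ℝ)). Then ϱ has a locally absolutely continuous version whose derivative equals ϱb almost everywhere; in particular ϱ' ∈ L¹(ℝ) and ϱ ∈ W^{1,1}(ℝ). -/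
open MeasureTheory Real Set Filter Metric intervalIntegral

noncomputable section

namespace FPKAux

lemma hcs_sub {f g : ℝ → ℝ} (hf : HasCompactSupport f) (hg : HasCompactSupport g) :
    HasCompactSupport (fun x => f x - g x) := by
  refine HasCompactSupport.intro (hf.union hg) fun x hx => ?_
  simp only [Set.mem_union, not_or] at hx
  rw [image_eq_zero_of_notMem_tsupport hx.1, image_eq_zero_of_notMem_tsupport hx.2, sub_zero]

lemma integral_deriv_eq_zero' {ψ : ℝ → ℝ} (hψ : ContDiff ℝ 1 ψ) (hψs : HasCompactSupport ψ) :
    ∫ x, deriv ψ x = 0 := by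
  have hcont : Continuous (deriv ψ) := hψ.continuous_deriv le_rfl
  have hint : Integrable (deriv ψ) := hcont.integrable_of_hasCompactSupport hψs.deriv
  rw [← integral_Iic_add_Ioi (b := 0) hint.integrableOn hint.integrableOn,
    HasCompactSupport.integral_Iic_deriv_eq hψ hψs 0,
    HasCompactSupport.integral_Ioi_deriv_eq hψ hψs 0]
  ring

lemma exists_antideriv {ψ : ℝ → ℝ} (hψ : ContDiff ℝ (⊤ : ℕ∞) ψ) (hψs : HasCompactSupport ψ)
    (h0 : ∫ x, ψ x = 0) :
    ∃ φ : ℝ → ℝ, ContDiff ℝ (⊤ : ℕ∞) φ ∧ HasCompactSupport φ ∧ deriv φ = ψ := by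
  obtain ⟨R, hRpos, hR₀⟩ := hψs.isBounded.subset_closedBall_lt 0 0
  have hR : tsupport ψ ⊆ Icc (-R) R := by
    refine hR₀.trans ?_
    rw [Real.closedBall_eq_Icc]
    exact Icc_subset_Icc (by linarith) (by linarith)
  have hzero : ∀ t : ℝ, t ∉ Icc (-R) R → ψ t = 0 := fun t ht =>
    image_eq_zero_of_notMem_tsupport (fun hmem => ht (hR hmem))
  set φ : ℝ → ℝ := fun x => ∫ t in (-(R+1))..x, ψ t with hφdef
  have hd : ∀ x, HasDerivAt φ (ψ x) x := fun x =>
    intervalIntegral.integral_hasDerivAt_right (hψ.continuous.intervalIntegrable _ _)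
      (hψ.continuous.stronglyMeasurableAtFilter _ _) hψ.continuous.continuousAt
  have hderiv : deriv φ = ψ := funext fun x => (hd x).deriv
  refine ⟨φ, ?_, ?_, hderiv⟩
  · exact contDiff_infty_iff_deriv.mpr ⟨fun x => (hd x).differentiableAt, hderiv ▸ hψ⟩
  · refine HasCompactSupport.intro (isCompact_Icc (a := -(R+1)) (b := R+1)) fun x hx => ?_
    rw [mem_Icc, not_and_or, not_le, not_le] at hx
    rcases hx with hx | hx
    · have : EqOn ψ (fun _ => (0:ℝ)) (uIcc (-(R+1)) x) := by
        intro t ht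
        rw [mem_uIcc] at ht
        refine hzero t ?_
        rw [mem_Icc, not_and_or, not_le]
        left
        rcases ht with ⟨h1, _⟩ | ⟨_, h2⟩ <;> linarith
      simpa [hφdef] using (intervalIntegral.integral_congr this).trans (by simp)
    · have hle : -(R+1) ≤ x := by linarith
      have : φ x = ∫ t, ψ t := by
        rw [hφdef]
        simp only
        rw [intervalIntegral.integral_of_le hle, ← MeasureTheory.integral_indicator measurableSet_Ioc]
        congr 1
        funext t
        by_cases ht : t ∈ Ioc (-(R+1)) x
        · rw [indicator_of_mem ht]
        · rw [indicator_of_notMem ht]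
          rw [mem_Ioc, not_and_or, not_lt, not_le] at ht
          refine (hzero t ?_).symm
          rw [mem_Icc, not_and_or, not_le, not_le]
          rcases ht with h1 | h2
          · left; linarith
          · right; linarith
      rw [this, h0]

lemma parts_id {ψ : ℝ → ℝ} (hψ : ContDiff ℝ (⊤ : ℕ∞) ψ) (hψs : HasCompactSupport ψ) :
    ∫ x, deriv ψ x * x = - ∫ x, ψ x := by
  have hψ1 : ContDiff ℝ 1 ψ := hψ.of_le (by exact_mod_cast le_top)
  have hdc : Continuous (deriv ψ) := hψ1.continuous_deriv le_rfl
  set P : ℝ → ℝ := fun x => ψ x * x with hPdef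
  have hPd : ∀ x, HasDerivAt P (deriv ψ x * x + ψ x) x := by
    intro x
    have h1 : HasDerivAt ψ (deriv ψ x) x := (hψ1.differentiable one_ne_zero x).hasDerivAt
    have := h1.mul (hasDerivAt_id x)
    exact this.congr_deriv (by simp)
  have hP1 : ContDiff ℝ 1 P := hψ1.mul contDiff_id
  have hPs : HasCompactSupport P := hψs.mul_right
  have h0 : ∫ x, deriv P x = 0 := integral_deriv_eq_zero' hP1 hPs
  have hderivP : deriv P = fun x => deriv ψ x * x + ψ x := funext fun x => (hPd x).deriv
  rw [hderivP] at h0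
  have hint1 : Integrable (fun x => deriv ψ x * x) :=
    (hdc.mul continuous_id).integrable_of_hasCompactSupport hψs.deriv.mul_right
  have hint2 : Integrable ψ := hψ.continuous.integrable_of_hasCompactSupport hψs
  rw [integral_add hint1 hint2] at h0
  linarith

lemma parts_primitive {h : ℝ → ℝ} (hm : Measurable h) (hh : Integrable h)
    {ψ : ℝ → ℝ} (hψ : ContDiff ℝ (⊤ : ℕ∞) ψ) (hψs : HasCompactSupport ψ) :
    ∫ x, deriv ψ x * (∫ t in (0:ℝ)..x, h t) = - ∫ t, ψ t * h t := by
  have hψ1 : ContDiff ℝ 1 ψ := hψ.of_le (by exact_mod_cast le_top)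
  have hdc : Continuous (deriv ψ) := hψ1.continuous_deriv le_rfl
  have hdint : Integrable (deriv ψ) := hdc.integrable_of_hasCompactSupport hψs.deriv
  set m : ℝ → ℝ → ℝ :=
    fun x t => (if t ≤ x then (1:ℝ) else 0) - (if t ≤ 0 then (1:ℝ) else 0) with hmdef
  have habs : ∀ x t, |m x t| ≤ 1 := by
    intro x t
    simp only [hmdef]
    split_ifs <;> norm_num
  -- representation of the primitive
  have hGm : ∀ x, (∫ t in (0:ℝ)..x, h t) = ∫ t, h t * m x t := by
    intro x
    rcases le_total 0 x with hx | hx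
    · rw [intervalIntegral.integral_of_le hx, ← MeasureTheory.integral_indicator measurableSet_Ioc]
      congr 1
      funext t
      by_cases ht : t ∈ Ioc 0 x
      · rw [indicator_of_mem ht]; simp only [hmdef]
        rw [mem_Ioc] at ht
        rw [if_pos ht.2, if_neg (by linarith [ht.1])]
        ring
      · rw [indicator_of_notMem ht]; simp only [hmdef]
        rw [mem_Ioc, not_and_or, not_lt, not_le] at ht
        rcases ht with h1 | h2
        · rw [if_pos (by linarith), if_pos h1]; ring
        · rw [if_neg (by linarith), if_neg (by linarith)]; ring
    · rw [intervalIntegral.integral_symm, intervalIntegral.integral_of_le hx,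
        ← MeasureTheory.integral_indicator measurableSet_Ioc, ← MeasureTheory.integral_neg]
      congr 1
      funext t
      by_cases ht : t ∈ Ioc x 0
      · rw [indicator_of_mem ht]; simp only [hmdef]
        rw [mem_Ioc] at ht
        rw [if_neg (by linarith [ht.1]), if_pos ht.2]
        ring
      · rw [indicator_of_notMem ht]; simp only [hmdef]
        rw [mem_Ioc, not_and_or, not_lt, not_le] at ht
        rcases ht with h1 | h2
        · rw [if_pos h1, if_pos (by linarith)]; ring
        · rw [if_neg (not_le.mpr (by linarith)), if_neg (not_le.mpr h2)]; ring
  -- integrability on the product space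
  have hmm : Measurable fun p : ℝ × ℝ => m p.1 p.2 := by
    rw [hmdef]
    exact ((measurable_const.ite (measurableSet_le measurable_snd measurable_fst)
      measurable_const).sub (measurable_const.ite
        (measurableSet_le measurable_snd measurable_const) measurable_const))
  have hF : Integrable (fun p : ℝ × ℝ => deriv ψ p.1 * (h p.2 * m p.1 p.2))
      (volume.prod volume) := by
    refine (hdint.abs.mul_prod hh.abs).mono'
      (((hdc.measurable.comp measurable_fst).mul
        ((hm.comp measurable_snd).mul hmm)).aestronglyMeasurable) (ae_of_all _ fun p => ?_)
    rw [Real.norm_eq_abs, abs_mul, abs_mul]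
    have := habs p.1 p.2
    have h1 : |h p.2| * |m p.1 p.2| ≤ |h p.2| * 1 :=
      mul_le_mul_of_nonneg_left this (abs_nonneg _)
    calc |deriv ψ p.1| * (|h p.2| * |m p.1 p.2|) ≤ |deriv ψ p.1| * (|h p.2| * 1) :=
          mul_le_mul_of_nonneg_left h1 (abs_nonneg _)
      _ = |deriv ψ p.1| * |h p.2| := by ring
  -- swap
  have hswap : ∫ x, ∫ t, deriv ψ x * (h t * m x t) = ∫ t, ∫ x, deriv ψ x * (h t * m x t) :=
    integral_integral_swap hF
  -- inner integral computation
  have hinner : ∀ t, ∫ x, deriv ψ x * (h t * m x t) = h t * (-ψ t) := by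
    intro t
    have e1 : (fun x => deriv ψ x * (h t * m x t)) =
        fun x => h t * (deriv ψ x * m x t) := by funext x; ring
    rw [e1, MeasureTheory.integral_const_mul]
    congr 1
    have e2 : (fun x => deriv ψ x * m x t) = fun x =>
        (Ici t).indicator (deriv ψ) x - (if t ≤ (0:ℝ) then deriv ψ x else 0) := by
      funext x
      simp only [hmdef]
      by_cases hx : t ≤ x
      · rw [if_pos hx, indicator_of_mem (mem_Ici.mpr hx)]
        split_ifs <;> ring
      · rw [if_neg hx, indicator_of_notMem (by simpa using hx)]
        split_ifs <;> ring
    rw [e2]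
    have hint1 : Integrable ((Ici t).indicator (deriv ψ)) :=
      hdint.indicator measurableSet_Ici
    have hint2 : Integrable (fun x => if t ≤ (0:ℝ) then deriv ψ x else 0) := by
      split_ifs
      · exact hdint
      · exact integrable_zero _ _ _
    rw [MeasureTheory.integral_sub hint1 hint2,
      MeasureTheory.integral_indicator measurableSet_Ici,
      MeasureTheory.integral_Ici_eq_integral_Ioi,
      HasCompactSupport.integral_Ioi_deriv_eq hψ1 hψs t]
    have : ∫ x, (if t ≤ (0:ℝ) then deriv ψ x else 0) = 0 := by
      split_ifs
      · exact integral_deriv_eq_zero' hψ1 hψs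
      · simp
    rw [this]
    ring
  calc ∫ x, deriv ψ x * (∫ t in (0:ℝ)..x, h t)
      = ∫ x, ∫ t, deriv ψ x * (h t * m x t) := by
        congr 1
        funext x
        rw [hGm x, MeasureTheory.integral_const_mul]
    _ = ∫ t, ∫ x, deriv ψ x * (h t * m x t) := hswap
    _ = ∫ t, h t * (-ψ t) := by congr 1; funext t; exact hinner t
    _ = - ∫ t, ψ t * h t := by rw [← MeasureTheory.integral_neg]; congr 1; funext t; ring

end FPKAux

/-- If `ϱ` is a probability density on `ℝ` and `b` is Borel with `∫ |b| ϱ dx < ∞` such that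
`ϱ'' − (ϱ b)' = 0` in the sense of distributions, then `ϱ` has a locally absolutely
continuous version (given by an indefinite integral of `ϱ b`) whose derivative is `ϱ b`
almost everywhere; in particular `ϱ' = ϱ b ∈ L¹(ℝ)` (as a weak derivative) and
`ϱ ∈ W^{1,1}(ℝ)`. -/
theorem one_dimensional_FPK_regularity (ϱ b : ℝ → ℝ)
    (hϱm : Measurable ϱ) (hϱ0 : ∀ x, 0 ≤ ϱ x) (hϱ1 : ∫ x, ϱ x = 1)
    (hbm : Measurable b)
    (hbϱ : Integrable (fun x => |b x| * ϱ x))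
    (heq : ∀ φ : ℝ → ℝ, ContDiff ℝ (⊤ : ℕ∞) φ → HasCompactSupport φ →
      ∫ x, (deriv (deriv φ) x + b x * deriv φ x) * ϱ x = 0) :
    ∃ g : ℝ → ℝ,
      (∀ᵐ x : ℝ, g x = ϱ x) ∧
      (∀ x y : ℝ, g y - g x = ∫ t in x..y, ϱ t * b t) ∧
      (∀ᵐ x : ℝ, HasDerivAt g (ϱ x * b x) x) ∧
      Integrable ϱ ∧ Integrable (fun x => ϱ x * b x) ∧
      (∀ φ : ℝ → ℝ, ContDiff ℝ (⊤ : ℕ∞) φ → HasCompactSupport φ →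
        ∫ x, (ϱ x * b x) * φ x = - ∫ x, ϱ x * deriv φ x) := by
  classical
  have hϱi : Integrable ϱ := by
    by_contra hn
    rw [MeasureTheory.integral_undef hn] at hϱ1
    exact one_ne_zero hϱ1.symm
  set h : ℝ → ℝ := fun x => ϱ x * b x with hhdef
  have hhm : Measurable h := hϱm.mul hbm
  have hhi : Integrable h := by
    refine hbϱ.mono' hhm.aestronglyMeasurable (ae_of_all _ fun x => ?_)
    simp only [hhdef, Real.norm_eq_abs]
    rw [abs_mul, abs_of_nonneg (hϱ0 x), mul_comm]
  -- integrability of products with test functions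
  have key_int1 : ∀ u : ℝ → ℝ, Continuous u → HasCompactSupport u →
      Integrable (fun x => u x * ϱ x) := by
    intro u hu hus
    obtain ⟨C, hC⟩ := hus.exists_bound_of_continuous hu
    refine (hϱi.const_mul C).mono' ((hu.measurable.mul hϱm).aestronglyMeasurable)
      (ae_of_all _ fun x => ?_)
    rw [Real.norm_eq_abs, abs_mul, abs_of_nonneg (hϱ0 x)]
    exact mul_le_mul_of_nonneg_right ((Real.norm_eq_abs (u x)) ▸ hC x) (hϱ0 x)
  have key_int2 : ∀ u : ℝ → ℝ, Continuous u → HasCompactSupport u →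
      Integrable (fun x => b x * u x * ϱ x) := by
    intro u hu hus
    obtain ⟨C, hC⟩ := hus.exists_bound_of_continuous hu
    refine (hbϱ.const_mul C).mono'
      (((hbm.mul hu.measurable).mul hϱm).aestronglyMeasurable)
      (ae_of_all _ fun x => ?_)
    rw [Real.norm_eq_abs, abs_mul, abs_mul, abs_of_nonneg (hϱ0 x)]
    have hu' : |u x| ≤ C := (Real.norm_eq_abs (u x)) ▸ hC x
    have := mul_nonneg (abs_nonneg (b x)) (hϱ0 x)
    calc |b x| * |u x| * ϱ x = |u x| * (|b x| * ϱ x) := by ring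
      _ ≤ C * (|b x| * ϱ x) := mul_le_mul_of_nonneg_right hu' this
  have hSint : ∀ ψ : ℝ → ℝ, ContDiff ℝ (⊤ : ℕ∞) ψ → HasCompactSupport ψ →
      Integrable (fun x => (deriv ψ x + b x * ψ x) * ϱ x) := by
    intro ψ hψ hψs
    have hψ1 : ContDiff ℝ 1 ψ := hψ.of_le (by exact_mod_cast le_top)
    have h1 := key_int1 (deriv ψ) (hψ1.continuous_deriv le_rfl) hψs.deriv
    have h2 := key_int2 ψ hψ.continuous hψs
    have heqn : (fun x => (deriv ψ x + b x * ψ x) * ϱ x)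
        = fun x => deriv ψ x * ϱ x + b x * ψ x * ϱ x := by funext x; ring
    rw [heqn]
    exact h1.add h2
  -- vanishing on zero-mean test functions
  have hΛ0 : ∀ ψ : ℝ → ℝ, ContDiff ℝ (⊤ : ℕ∞) ψ → HasCompactSupport ψ → (∫ x, ψ x) = 0 →
      ∫ x, (deriv ψ x + b x * ψ x) * ϱ x = 0 := by
    intro ψ hψ hψs h0
    obtain ⟨φ, hφ, hφs, hφd⟩ := FPKAux.exists_antideriv hψ hψs h0
    have := heq φ hφ hφs
    rwa [hφd] at this
  -- the bump function
  let θb : ContDiffBump (0:ℝ) := ⟨1, 2, one_pos, one_lt_two⟩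
  set θ : ℝ → ℝ := θb.normed volume with hθdef
  have hθ : ContDiff ℝ (⊤ : ℕ∞) θ := θb.contDiff_normed
  have hθs : HasCompactSupport θ := θb.hasCompactSupport_normed
  have hθ1 : ∫ x, θ x = 1 := θb.integral_normed
  have hθ1' : ContDiff ℝ 1 θ := hθ.of_le (by exact_mod_cast le_top)
  have hθd : Differentiable ℝ θ := hθ1'.differentiable one_ne_zero
  set c : ℝ := ∫ x, (deriv θ x + b x * θ x) * ϱ x with hcdef
  -- the full distributional identity
  have hΛ : ∀ ψ : ℝ → ℝ, ContDiff ℝ (⊤ : ℕ∞) ψ → HasCompactSupport ψ →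
      ∫ x, (deriv ψ x + b x * ψ x) * ϱ x = (∫ x, ψ x) * c := by
    intro ψ hψ hψs
    have hψ1 : ContDiff ℝ 1 ψ := hψ.of_le (by exact_mod_cast le_top)
    have hψd : Differentiable ℝ ψ := hψ1.differentiable one_ne_zero
    set a : ℝ := ∫ x, ψ x with hadef
    have hsub : ContDiff ℝ (⊤ : ℕ∞) (fun x => ψ x - a * θ x) :=
      hψ.sub (contDiff_const.mul hθ)
    have hsubs : HasCompactSupport (fun x => ψ x - a * θ x) :=
      FPKAux.hcs_sub hψs hθs.mul_left
    have hsub0 : ∫ x, (ψ x - a * θ x) = 0 := by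
      rw [MeasureTheory.integral_sub (hψ.continuous.integrable_of_hasCompactSupport hψs)
        ((hθ.continuous.integrable_of_hasCompactSupport hθs).const_mul a),
        MeasureTheory.integral_const_mul, hθ1]
      ring
    have h0 := hΛ0 _ hsub hsubs hsub0
    have hderivsub : deriv (fun x => ψ x - a * θ x) = fun x => deriv ψ x - a * deriv θ x := by
      funext x
      rw [deriv_fun_sub (hψd x) ((hθd x).const_mul a), deriv_const_mul a (hθd x)]
    rw [hderivsub] at h0
    have hexp : (fun x => ((fun x => deriv ψ x - a * deriv θ x) x + b x * (ψ x - a * θ x)) * ϱ x)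
        = fun x => (deriv ψ x + b x * ψ x) * ϱ x - a * ((deriv θ x + b x * θ x) * ϱ x) := by
      funext x; simp only; ring
    rw [hexp, MeasureTheory.integral_sub (hSint ψ hψ hψs) ((hSint θ hθ hθs).const_mul a),
      MeasureTheory.integral_const_mul] at h0
    linarith
  -- the primitive
  set G : ℝ → ℝ := fun x => ∫ t in (0:ℝ)..x, h t with hGdef
  have hGc : Continuous G :=
    intervalIntegral.continuous_primitive (fun _ _ => hhi.intervalIntegrable) 0
  set w : ℝ → ℝ := fun x => ϱ x - G x + c * x with hwdef
  have hwint : ∀ u : ℝ → ℝ, Continuous u → HasCompactSupport u →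
      Integrable (fun x => u x * w x) := by
    intro u hu hus
    have i1 := key_int1 u hu hus
    have i2 : Integrable (fun x => u x * G x) :=
      (hu.mul hGc).integrable_of_hasCompactSupport hus.mul_right
    have i3 : Integrable (fun x => u x * (c * x)) :=
      (hu.mul (continuous_const.mul continuous_id)).integrable_of_hasCompactSupport
        hus.mul_right
    have heqn : (fun x => u x * w x)
        = fun x => (u x * ϱ x - u x * G x) + u x * (c * x) := by
      funext x; simp only [hwdef]; ring
    rw [heqn]
    exact (i1.sub i2).add i3
  set K : ℝ := ∫ x, θ x * w x with hKdef
  have hgw : ∀ u : ℝ → ℝ, ContDiff ℝ (⊤ : ℕ∞) u → HasCompactSupport u →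
      ∫ x, u x * w x = (∫ x, u x) * K := by
    intro u hu hus
    set a : ℝ := ∫ x, u x with hadef
    have hsub : ContDiff ℝ (⊤ : ℕ∞) (fun x => u x - a * θ x) :=
      hu.sub (contDiff_const.mul hθ)
    have hsubs : HasCompactSupport (fun x => u x - a * θ x) :=
      FPKAux.hcs_sub hus hθs.mul_left
    have hsub0 : ∫ x, (u x - a * θ x) = 0 := by
      rw [MeasureTheory.integral_sub (hu.continuous.integrable_of_hasCompactSupport hus)
        ((hθ.continuous.integrable_of_hasCompactSupport hθs).const_mul a),
        MeasureTheory.integral_const_mul, hθ1]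
      ring
    obtain ⟨Φ, hΦ, hΦs, hΦd⟩ := FPKAux.exists_antideriv hsub hsubs hsub0
    have hΦ1 : ContDiff ℝ 1 Φ := hΦ.of_le (by exact_mod_cast le_top)
    have hdc : Continuous (deriv Φ) := hΦ1.continuous_deriv le_rfl
    -- ∫ deriv Φ · ϱ
    have e1 : ∫ x, deriv Φ x * ϱ x = (∫ x, Φ x) * c - ∫ x, b x * Φ x * ϱ x := by
      have hid := hΛ Φ hΦ hΦs
      have hsplit : ∫ x, (deriv Φ x + b x * Φ x) * ϱ x
          = (∫ x, deriv Φ x * ϱ x) + ∫ x, b x * Φ x * ϱ x := by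
        have heqn : (fun x => (deriv Φ x + b x * Φ x) * ϱ x)
            = fun x => deriv Φ x * ϱ x + b x * Φ x * ϱ x := by funext x; ring
        rw [heqn]
        exact MeasureTheory.integral_add (key_int1 _ hdc hΦs.deriv)
          (key_int2 _ hΦ.continuous hΦs)
      linarith
    have e2 : ∫ x, deriv Φ x * G x = - ∫ t, Φ t * h t := by
      simp only [hGdef]
      exact FPKAux.parts_primitive hhm hhi hΦ hΦs
    have e3 : ∫ x, deriv Φ x * x = - ∫ x, Φ x := FPKAux.parts_id hΦ hΦs
    have e5 : ∫ t, Φ t * h t = ∫ x, b x * Φ x * ϱ x := by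
      congr 1; funext t; simp only [hhdef]; ring
    have e4 : ∫ x, deriv Φ x * w x = 0 := by
      have hd1 : Integrable (fun x => deriv Φ x * ϱ x) := key_int1 _ hdc hΦs.deriv
      have hd2 : Integrable (fun x => deriv Φ x * G x) :=
        (hdc.mul hGc).integrable_of_hasCompactSupport hΦs.deriv.mul_right
      have hd3 : Integrable (fun x => c * (deriv Φ x * x)) :=
        ((continuous_const.mul (hdc.mul continuous_id)).integrable_of_hasCompactSupport
          (by exact (hΦs.deriv.mul_right).mul_left))
      have heqn : (fun x => deriv Φ x * w x)
          = fun x => (deriv Φ x * ϱ x - deriv Φ x * G x) + c * (deriv Φ x * x) := by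
        funext x; simp only [hwdef]; ring
      have hd12 : Integrable (fun x => deriv Φ x * ϱ x - deriv Φ x * G x) := hd1.sub hd2
      rw [heqn, MeasureTheory.integral_add hd12 hd3,
        MeasureTheory.integral_sub hd1 hd2, MeasureTheory.integral_const_mul, e1, e2, e3, e5]
      ring
    rw [hΦd] at e4
    have heqn : (fun x => (fun x => u x - a * θ x) x * w x)
        = fun x => u x * w x - a * (θ x * w x) := by funext x; simp only; ring
    rw [heqn, MeasureTheory.integral_sub (hwint u hu.continuous hus)
      ((hwint θ hθ.continuous hθs).const_mul a), MeasureTheory.integral_const_mul] at e4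
    linarith
  -- identify w with the constant K almost everywhere
  have hw_ae : ∀ᵐ x : ℝ, w x - K = 0 := by
    have l1 : LocallyIntegrable w volume := by
      have l2 : LocallyIntegrable (fun x => ϱ x - G x + c * x) volume :=
        (hϱi.locallyIntegrable.sub hGc.locallyIntegrable).add
          (continuous_const.mul continuous_id).locallyIntegrable
      rw [hwdef]
      exact l2
    have hli : LocallyIntegrable (fun x => w x - K) volume :=
      l1.sub (locallyIntegrable_const K)
    have hz : ∀ g : ℝ → ℝ, ContDiff ℝ (⊤ : ℕ∞) g → HasCompactSupport g →
        ∫ x, g x • (w x - K) = 0 := by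
      intro g hg hgs
      have hg1 : Integrable (fun x => g x * w x) := hwint g hg.continuous hgs
      have hg2 : Integrable (fun x => g x * K) :=
        (hg.continuous.integrable_of_hasCompactSupport hgs).mul_const K
      have heqn : (fun x => g x • (w x - K)) = fun x => g x * w x - g x * K := by
        funext x; rw [smul_eq_mul]; ring
      rw [heqn, MeasureTheory.integral_sub hg1 hg2, hgw g hg hgs,
        MeasureTheory.integral_mul_const]
      ring
    exact ae_eq_zero_of_integral_contDiff_smul_eq_zero hli hz
  -- the primitive is bounded
  set M : ℝ := ∫ t, |h t| with hMdef
  have hGbound : ∀ x, |G x| ≤ M := by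
    intro x
    have h1 : |G x| ≤ abs (∫ t in (0:ℝ)..x, |h t|) := by
      have := intervalIntegral.norm_integral_le_abs_integral_norm
        (f := h) (a := (0:ℝ)) (b := x) (μ := volume)
      simpa [hGdef, Real.norm_eq_abs] using this
    refine h1.trans ?_
    rcases le_total 0 x with hx | hx
    · rw [intervalIntegral.integral_of_le hx]
      have hnn : 0 ≤ ∫ t in Set.Ioc 0 x, |h t| :=
        MeasureTheory.integral_nonneg fun t => abs_nonneg _
      rw [abs_of_nonneg hnn]
      exact MeasureTheory.setIntegral_le_integral hhi.abs (ae_of_all _ fun t => abs_nonneg _)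
    · rw [intervalIntegral.integral_symm, intervalIntegral.integral_of_le hx, abs_neg]
      have hnn : 0 ≤ ∫ t in Set.Ioc x 0, |h t| :=
        MeasureTheory.integral_nonneg fun t => abs_nonneg _
      rw [abs_of_nonneg hnn]
      exact MeasureTheory.setIntegral_le_integral hhi.abs (ae_of_all _ fun t => abs_nonneg _)
  -- c must vanish
  have hc0 : c = 0 := by
    by_contra hc
    have hmain : ∀ x : ℝ, (w x - K = 0) → ϱ x = K + G x - c * x := by
      intro x hx; simp only [hwdef] at hx; linarith
    have habs : ∀ x : ℝ, (w x - K = 0) → (M + |K| + 1 < c * x) → False := by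
      intro x hx hcx
      have h1 : G x ≤ M := (abs_le.mp (hGbound x)).2
      have h2 : K ≤ |K| := le_abs_self K
      have h3 := hϱ0 x
      have h4 := hmain x hx
      linarith
    rcases lt_or_gt_of_ne hc with hneg | hpos
    · set R : ℝ := (M + |K| + 1)/c with hRdef
      have hcR : c * R = M + |K| + 1 := by
        rw [hRdef]; field_simp
      haveI : Filter.NeBot (ae (volume.restrict (Set.Iio R))) := by
        rw [MeasureTheory.ae_neBot, Ne, Measure.restrict_eq_zero]
        simp [Real.volume_Iio]
      have hset : ∀ᵐ x ∂(volume.restrict (Set.Iio R)), w x - K = 0 :=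
        hw_ae.filter_mono (MeasureTheory.ae_mono Measure.restrict_le_self)
      obtain ⟨x, hx1, hx2⟩ := (hset.and (ae_restrict_mem measurableSet_Iio)).exists
      exact habs x hx1 (by
        have := mul_lt_mul_of_neg_left hx2 hneg
        rw [hcR] at this
        exact this)
    · set R : ℝ := (M + |K| + 1)/c with hRdef
      have hcR : c * R = M + |K| + 1 := by
        rw [hRdef]; field_simp
      haveI : Filter.NeBot (ae (volume.restrict (Set.Ioi R))) := by
        rw [MeasureTheory.ae_neBot, Ne, Measure.restrict_eq_zero]
        simp [Real.volume_Ioi]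
      have hset : ∀ᵐ x ∂(volume.restrict (Set.Ioi R)), w x - K = 0 :=
        hw_ae.filter_mono (MeasureTheory.ae_mono Measure.restrict_le_self)
      obtain ⟨x, hx1, hx2⟩ := (hset.and (ae_restrict_mem measurableSet_Ioi)).exists
      exact habs x hx1 (by
        have := mul_lt_mul_of_pos_left hx2 hpos
        rw [hcR] at this
        exact this)
  -- the good version of ϱ
  have hae2 : ∀ᵐ x : ℝ, ϱ x = G x + K := by
    filter_upwards [hw_ae] with x hx
    simp only [hwdef, hc0] at hx
    linarith
  have hg2 : ∀ x y : ℝ, (G y + K) - (G x + K) = ∫ t in x..y, h t := by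
    intro x y
    have := intervalIntegral.integral_interval_sub_left
      (f := h) (μ := volume) (a := (0:ℝ)) (b := y) (c := x)
      hhi.intervalIntegrable hhi.intervalIntegrable
    simp only [hGdef]
    linarith
  -- the derivative almost everywhere
  have hderiv_ae : ∀ᵐ x : ℝ, HasDerivAt (fun y => G y + K) (h x) x := by
    have hvit := (IsUnifLocDoublingMeasure.vitaliFamily (volume : Measure ℝ)
      1).ae_tendsto_average_norm_sub hhi.locallyIntegrable
    filter_upwards [hvit] with x hx
    rw [hasDerivAt_iff_tendsto_slope]
    have key : ∀ lo hi : ℝ, lo < hi →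
        |(∫ t in lo..hi, h t)/(hi - lo) - h x| ≤ ⨍ t in Set.Icc lo hi, ‖h t - h x‖ := by
      intro lo hi hlt
      have hpos : 0 < hi - lo := by linarith
      have hIcc : ∫ t in lo..hi, (h t - h x)
          = (∫ t in lo..hi, h t) - (hi - lo) * h x := by
        rw [intervalIntegral.integral_sub hhi.intervalIntegrable intervalIntegrable_const,
          intervalIntegral.integral_const, smul_eq_mul]
      have h2 : |∫ t in lo..hi, (h t - h x)| ≤ ∫ t in Set.Icc lo hi, |h t - h x| := by
        have hb := intervalIntegral.abs_integral_le_integral_abs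
          (f := fun t => h t - h x) (a := lo) (b := hi) (μ := volume) hlt.le
        have he : ∫ t in lo..hi, |h t - h x| = ∫ t in Set.Icc lo hi, |h t - h x| := by
          rw [intervalIntegral.integral_of_le hlt.le,
            MeasureTheory.integral_Icc_eq_integral_Ioc]
        rw [he] at hb
        exact hb
      have havg : ⨍ t in Set.Icc lo hi, ‖h t - h x‖
          = (hi - lo)⁻¹ * ∫ t in Set.Icc lo hi, |h t - h x| := by
        rw [MeasureTheory.setAverage_eq, Real.volume_real_Icc_of_le hlt.le,
          smul_eq_mul]
        simp [Real.norm_eq_abs]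
      have hrw : (∫ t in lo..hi, h t)/(hi - lo) - h x
          = (hi - lo)⁻¹ * ((∫ t in lo..hi, h t) - (hi - lo) * h x) := by
        field_simp
      calc |(∫ t in lo..hi, h t)/(hi - lo) - h x|
          = (hi - lo)⁻¹ * |∫ t in lo..hi, (h t - h x)| := by
            rw [hrw, abs_mul, abs_inv, abs_of_pos hpos, hIcc]
        _ ≤ (hi - lo)⁻¹ * ∫ t in Set.Icc lo hi, |h t - h x| :=
            mul_le_mul_of_nonneg_left h2 (inv_nonneg.mpr hpos.le)
        _ = ⨍ t in Set.Icc lo hi, ‖h t - h x‖ := havg.symm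
    rw [← nhdsLT_sup_nhdsGT x, Filter.tendsto_sup]
    constructor
    · -- from the left
      have hcomp := hx.comp (Real.tendsto_Icc_vitaliFamily_left x)
      rw [← tendsto_sub_nhds_zero_iff]
      refine squeeze_zero_norm' ?_ hcomp
      filter_upwards [self_mem_nhdsWithin] with y hy
      have hy' : y < x := hy
      have hslope : slope (fun y => G y + K) x y = (∫ t in y..x, h t)/(x - y) := by
        rw [slope_def_field]
        rw [hg2 x y]
        rw [intervalIntegral.integral_symm]
        rw [div_eq_div_iff (by linarith) (by linarith)]
        ring
      rw [Real.norm_eq_abs, hslope]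
      exact key y x hy'
    · -- from the right
      have hcomp := hx.comp (Real.tendsto_Icc_vitaliFamily_right x)
      rw [← tendsto_sub_nhds_zero_iff]
      refine squeeze_zero_norm' ?_ hcomp
      filter_upwards [self_mem_nhdsWithin] with y hy
      have hy' : x < y := hy
      have hslope : slope (fun y => G y + K) x y = (∫ t in x..y, h t)/(y - x) := by
        rw [slope_def_field]
        rw [hg2 x y]
      rw [Real.norm_eq_abs, hslope]
      exact key x y hy'
  -- assemble the result
  refine ⟨fun x => G x + K, ?_, ?_, ?_, hϱi, ?_, ?_⟩
  · filter_upwards [hae2] with x hx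
    exact hx.symm
  · intro x y
    have := hg2 x y
    simpa only [hhdef] using this
  · filter_upwards [hderiv_ae] with x hx
    simpa only [hhdef] using hx
  · simpa only [hhdef] using hhi
  · intro φ hφ hφs
    have hid := hΛ φ hφ hφs
    rw [hc0, mul_zero] at hid
    have hφ1 : ContDiff ℝ 1 φ := hφ.of_le (by exact_mod_cast le_top)
    have hsplit : ∫ x, (deriv φ x + b x * φ x) * ϱ x
        = (∫ x, deriv φ x * ϱ x) + ∫ x, b x * φ x * ϱ x := by
      have heqn : (fun x => (deriv φ x + b x * φ x) * ϱ x)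
          = fun x => deriv φ x * ϱ x + b x * φ x * ϱ x := by funext x; ring
      rw [heqn]
      exact MeasureTheory.integral_add
        (key_int1 _ (hφ1.continuous_deriv le_rfl) hφs.deriv)
        (key_int2 _ hφ.continuous hφs)
    have e1 : ∫ x, (ϱ x * b x) * φ x = ∫ x, b x * φ x * ϱ x := by
      congr 1; funext x; ring
    have e2 : ∫ x, ϱ x * deriv φ x = ∫ x, deriv φ x * ϱ x := by
      congr 1; funext x; ring
    rw [e1, e2]
    linarith
end
end
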